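/- Let (Δ,u) be a labeled polytope in ℝⁿ with 0 in the interior of Δ, and set λ = max_{1≤l≤d} L_l(0) (so λ > 0). Then for every b ∈ Ω: F(b) ≥ (2n/λ)ⁿ · Z₀(b). -/

import Mathlib

open scoped RealInnerProductSpace
open MeasureTheory

noncomputable section

/-- A labeled polytope datum in `ℝⁿ`: `d` inward normals `u l` together with
constants `lam l`, giving defining affine functions `L l x = ⟪u l, x⟫ + lam l`. -/
structure LabeledPolytope (n d : ℕ) where
  u : Fin d → EuclideanSpace ℝ (Fin n)
  lam : Fin d → ℝ

namespace LabeledPolytope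

variable {n d : ℕ}

/-- The defining affine functions `L_l`. -/
def L (P : LabeledPolytope n d) (l : Fin d) (x : EuclideanSpace ℝ (Fin n)) : ℝ :=
  ⟪P.u l, x⟫ + P.lam l

/-- The polytope `Δ = {x | L_l x ≥ 0 ∀ l}`. -/
def Delta (P : LabeledPolytope n d) : Set (EuclideanSpace ℝ (Fin n)) :=
  {x | ∀ l, 0 ≤ P.L l x}

/-- The facet `F_l = Δ ∩ {L_l = 0}`. -/
def Facet (P : LabeledPolytope n d) (l : Fin d) : Set (EuclideanSpace ℝ (Fin n)) :=
  {x | x ∈ P.Delta ∧ P.L l x = 0}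

/-- `(Δ,u)` is a labeled polytope: `n ≥ 1`, `Δ` is a compact polytope with nonempty
interior, and each `F_l` is a nonempty facet of dimension `n - 1`. -/
structure IsLabeledPolytope (P : LabeledPolytope n d) : Prop where
  npos : 1 ≤ n
  compact : IsCompact P.Delta
  int_nonempty : (interior P.Delta).Nonempty
  facet_nonempty : ∀ l, (P.Facet l).Nonempty
  facet_dim : ∀ l, Module.finrank ℝ (affineSpan ℝ (P.Facet l)).direction = n - 1

/-- The value of the affine function `b = (b₀, b′)` at `x`. -/
def bval (b : ℝ × EuclideanSpace ℝ (Fin n)) (x : EuclideanSpace ℝ (Fin n)) : ℝ :=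
  b.1 + ⟪b.2, x⟫

/-- The pairing `⟨(y₀,y),(b₀,b′)⟩ = b₀ y₀ + ⟨b′, y⟩`. -/
def pairing (y b : ℝ × EuclideanSpace ℝ (Fin n)) : ℝ :=
  b.1 * y.1 + ⟪b.2, y.2⟫

/-- The cone `C(Δ) = {(y₀,y) | λ_l y₀ + ⟨u_l, y⟩ ≥ 0 ∀ l} ⊆ ℝ^{1+n}`. -/
def Cone (P : LabeledPolytope n d) : Set (ℝ × EuclideanSpace ℝ (Fin n)) :=
  {y | ∀ l, 0 ≤ P.lam l * y.1 + ⟪P.u l, y.2⟫}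

/-- The dual cone `C*(Δ)`. -/
def Cstar (P : LabeledPolytope n d) : Set (ℝ × EuclideanSpace ℝ (Fin n)) :=
  {b | ∀ y ∈ P.Cone, 0 ≤ pairing y b}

/-- `C*₊(Δ)`: affine functions strictly positive on `Δ`. -/
def CstarPlus (P : LabeledPolytope n d) : Set (ℝ × EuclideanSpace ℝ (Fin n)) :=
  {b | ∀ μ ∈ P.Delta, 0 < bval b μ}

/-- The map `Ψ_b(μ) = (1,μ)/b(μ)`. -/
def Psi (b : ℝ × EuclideanSpace ℝ (Fin n)) (x : EuclideanSpace ℝ (Fin n)) :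
    ℝ × EuclideanSpace ℝ (Fin n) :=
  (bval b x)⁻¹ • ((1 : ℝ), x)

/-- The boundary measure `σ_l`: `‖u_l‖⁻¹` times the `(n-1)`-dimensional Hausdorff
measure restricted to the facet `F_l`. -/
def facetMeasure (P : LabeledPolytope n d) (l : Fin d) :
    Measure (EuclideanSpace ℝ (Fin n)) :=
  (ENNReal.ofReal ‖P.u l‖⁻¹) • (μH[(n : ℝ) - 1]).restrict (P.Facet l)

/-- `W₀₀(b) = ∫_Δ b(μ)^{-(n+1)} dμ`. -/
def W00 (P : LabeledPolytope n d) (b : ℝ × EuclideanSpace ℝ (Fin n)) : ℝ :=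
  ∫ μ in P.Delta, (bval b μ ^ (n + 1))⁻¹

/-- `W_{i0}(b) = ∫_Δ μ_i b(μ)^{-(n+2)} dμ`. -/
def Wi0 (P : LabeledPolytope n d) (i : Fin n) (b : ℝ × EuclideanSpace ℝ (Fin n)) : ℝ :=
  ∫ μ in P.Delta, μ i * (bval b μ ^ (n + 2))⁻¹

/-- `Z₀(b) = 2 Σ_l ∫_{F_l} b(μ)^{-n} dσ_l`. -/
def Z0 (P : LabeledPolytope n d) (b : ℝ × EuclideanSpace ℝ (Fin n)) : ℝ :=
  2 * ∑ l, ∫ μ, (bval b μ ^ n)⁻¹ ∂(P.facetMeasure l)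

/-- `Z_i(b) = 2 Σ_l ∫_{F_l} μ_i b(μ)^{-(n+1)} dσ_l`. -/
def Zi (P : LabeledPolytope n d) (i : Fin n) (b : ℝ × EuclideanSpace ℝ (Fin n)) : ℝ :=
  2 * ∑ l, ∫ μ, μ i * (bval b μ ^ (n + 1))⁻¹ ∂(P.facetMeasure l)

/-- `Ω = {b ∈ C*₊(Δ) : b₀ = 1}`, viewed as an open subset of `ℝⁿ` via `b ↔ b′`. -/
def Omega (P : LabeledPolytope n d) : Set (EuclideanSpace ℝ (Fin n)) :=
  {b' | ((1 : ℝ), b') ∈ P.CstarPlus}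

/-- The functional `F(b) = Z₀(b)^{n+1} / W₀₀(b)ⁿ` as a function of `b′` (with `b₀ = 1`). -/
def Fcal (P : LabeledPolytope n d) (b' : EuclideanSpace ℝ (Fin n)) : ℝ :=
  P.Z0 (1, b') ^ (n + 1) / P.W00 (1, b') ^ n

end LabeledPolytope

section Stmt8Aux

open LabeledPolytope Set MeasureTheory
open scoped ENNReal

variable {n d : ℕ}

namespace LabeledPolytope

lemma L_continuous (P : LabeledPolytope n d) (l : Fin d) : Continuous (P.L l) :=
  ((continuous_const.inner continuous_id).add continuous_const : _)

lemma delta_convex (P : LabeledPolytope n d) : Convex ℝ P.Delta := by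
  intro x hx y hy a b ha hb hab
  intro l
  have h1 := hx l
  have h2 := hy l
  simp only [L, inner_add_right, real_inner_smul_right] at *
  have h3 : a * P.lam l + b * P.lam l = P.lam l := by rw [← add_mul, hab, one_mul]
  nlinarith [mul_nonneg ha h1, mul_nonneg hb h2, h3]

lemma delta_closed (P : LabeledPolytope n d) : IsClosed P.Delta := by
  have : P.Delta = ⋂ l, {x | 0 ≤ P.L l x} := by ext x; simp [Delta]
  rw [this]
  exact isClosed_iInter fun l => isClosed_le continuous_const (P.L_continuous l)

lemma facet_closed (P : LabeledPolytope n d) (l : Fin d) : IsClosed (P.Facet l) := by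
  have : P.Facet l = P.Delta ∩ {x | P.L l x = 0} := rfl
  rw [this]
  exact P.delta_closed.inter (isClosed_eq (P.L_continuous l) continuous_const)

lemma facet_subset (P : LabeledPolytope n d) (l : Fin d) : P.Facet l ⊆ P.Delta :=
  fun _ h => h.1

lemma facet_compact (P : LabeledPolytope n d) (hP : P.IsLabeledPolytope) (l : Fin d) :
    IsCompact (P.Facet l) := by
  exact hP.compact.of_isClosed_subset (P.facet_closed l) (P.facet_subset l)

lemma u_ne_zero (P : LabeledPolytope n d) (hP : P.IsLabeledPolytope) (l : Fin d) :
    P.u l ≠ 0 := by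
  intro h
  have hlam : P.lam l = 0 := by
    obtain ⟨y, hy⟩ := hP.facet_nonempty l
    have h2 := hy.2
    simpa [L, h] using h2
  have hF : P.Facet l = P.Delta := by
    ext x
    simp [Facet, L, h, hlam]
  have htop : affineSpan ℝ (P.Facet l) = ⊤ := by
    rw [hF]
    apply affineSpan_eq_top_of_nonempty_interior
    rw [P.delta_convex.convexHull_eq]
    exact hP.int_nonempty
  have hdim := hP.facet_dim l
  rw [htop, AffineSubspace.direction_top] at hdim
  have hfr : Module.finrank ℝ (⊤ : Submodule ℝ (EuclideanSpace ℝ (Fin n))) = n := by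
    rw [finrank_top]
    exact finrank_euclideanSpace_fin
  rw [hfr] at hdim
  have := hP.npos
  omega

lemma lam_pos (P : LabeledPolytope n d) (hP : P.IsLabeledPolytope)
    (h0 : (0 : EuclideanSpace ℝ (Fin n)) ∈ interior P.Delta) (l : Fin d) : 0 < P.lam l := by
  have h0' : (0 : EuclideanSpace ℝ (Fin n)) ∈ P.Delta := interior_subset h0
  have hge : 0 ≤ P.lam l := by simpa [L] using h0' l
  rcases hge.lt_or_eq with h | h
  · exact h
  · exfalso
    obtain ⟨ε, hε, hball⟩ := Metric.isOpen_iff.1 isOpen_interior 0 h0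
    have hu : P.u l ≠ 0 := P.u_ne_zero hP l
    have hun : 0 < ‖P.u l‖ := norm_pos_iff.2 hu
    set t : ℝ := ε / 2 * ‖P.u l‖⁻¹ with ht
    have htpos : 0 < t := by positivity
    set x : EuclideanSpace ℝ (Fin n) := (-t) • P.u l with hx
    have hxmem : x ∈ P.Delta := by
      apply interior_subset
      apply hball
      rw [Metric.mem_ball, dist_zero_right, hx, norm_smul]
      simp only [norm_neg, Real.norm_eq_abs, abs_of_pos htpos]
      rw [ht]
      rw [mul_assoc, inv_mul_cancel₀ hun.ne', mul_one]
      linarith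
    have hL := hxmem l
    rw [L, hx, real_inner_smul_right, real_inner_self_eq_norm_sq, ← h] at hL
    nlinarith [mul_pos htpos (mul_pos hun hun)]

/-- The (compact) cone over the facet `F_l` with apex `0`. -/
def coneSet (P : LabeledPolytope n d) (l : Fin d) : Set (EuclideanSpace ℝ (Fin n)) :=
  (fun p : ℝ × EuclideanSpace ℝ (Fin n) => p.1 • p.2) '' (Set.Icc (0:ℝ) 1 ×ˢ P.Facet l)

lemma coneSet_compact (P : LabeledPolytope n d) (hP : P.IsLabeledPolytope) (l : Fin d) :
    IsCompact (P.coneSet l) := by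
  exact (isCompact_Icc.prod (P.facet_compact hP l)).image continuous_smul

lemma coneSet_subset (P : LabeledPolytope n d)
    (h0 : (0 : EuclideanSpace ℝ (Fin n)) ∈ P.Delta) (l : Fin d) :
    P.coneSet l ⊆ P.Delta := by
  rintro x ⟨⟨t, y⟩, ⟨⟨ht0, ht1⟩, hy⟩, rfl⟩
  have := P.delta_convex hy.1 h0 ht0 (by linarith : (0:ℝ) ≤ 1 - t) (by ring)
  simpa using this

lemma delta_subset_iUnion (P : LabeledPolytope n d) (hP : P.IsLabeledPolytope)
    [Nonempty (Fin d)] :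
    P.Delta ⊆ ⋃ l, P.coneSet l := by
  intro x hx
  rcases eq_or_ne x 0 with rfl | hx0
  · obtain ⟨y, hy⟩ := hP.facet_nonempty (Classical.arbitrary (Fin d))
    exact Set.mem_iUnion.2 ⟨_, ⟨(0, y), ⟨⟨le_refl 0, zero_le_one⟩, hy⟩, by simp⟩⟩
  · set T := {r : ℝ | 1 ≤ r ∧ r • x ∈ P.Delta} with hT
    have hT1 : (1:ℝ) ∈ T := ⟨le_refl 1, by simpa using hx⟩
    have hTne : T.Nonempty := ⟨1, hT1⟩
    have hTc : IsClosed T := by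
      apply IsClosed.inter (isClosed_le continuous_const continuous_id)
      exact P.delta_closed.preimage (continuous_id.smul continuous_const)
    obtain ⟨R, hR⟩ := hP.compact.isBounded.subset_closedBall 0
    have hxn : 0 < ‖x‖ := norm_pos_iff.2 hx0
    have hTb : BddAbove T := by
      refine ⟨R / ‖x‖, fun r hr => ?_⟩
      have h1 : ‖r • x‖ ≤ R := by
        have := hR hr.2
        simpa [Metric.mem_closedBall, dist_zero_right] using this
      rw [norm_smul, Real.norm_eq_abs, abs_of_pos (by linarith [hr.1] : (0:ℝ) < r)] at h1
      exact (le_div_iff₀ hxn).2 h1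
    set r := sSup T with hrdef
    have hrT : r ∈ T := hTc.csSup_mem hTne hTb
    have hr1 : 1 ≤ r := hrT.1
    have hrpos : 0 < r := by linarith
    have hry : r • x ∈ P.Delta := hrT.2
    have hactive : ∃ l, P.L l (r • x) = 0 := by
      by_contra hno
      push_neg at hno
      have hpos : ∀ l, 0 < P.L l (r • x) := fun l => lt_of_le_of_ne (hry l) (Ne.symm (hno l))
      have hne : (Finset.univ : Finset (Fin d)).Nonempty := Finset.univ_nonempty
      set δ := Finset.univ.inf' hne (fun l => P.L l (r • x)) with hδ
      have hδpos : 0 < δ := (Finset.lt_inf'_iff hne).2 fun l _ => hpos l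
      set Mu := Finset.univ.sup' hne (fun l => ‖P.u l‖) with hMu
      have hMu0 : 0 ≤ Mu := by
        rw [hMu]
        exact le_trans (norm_nonneg (P.u (Classical.arbitrary _)))
          (Finset.le_sup' (fun l => ‖P.u l‖) (Finset.mem_univ (Classical.arbitrary _)))
      set ε := δ / (Mu * ‖x‖ + 1) with hε
      have hden : 0 < Mu * ‖x‖ + 1 := by positivity
      have hεpos : 0 < ε := by positivity
      have hmem : (r + ε) • x ∈ P.Delta := by
        intro l
        have hL : P.L l ((r + ε) • x) = P.L l (r • x) + ε * ⟪P.u l, x⟫ := by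
          simp only [L, real_inner_smul_right]
          ring
        have h2 : δ ≤ P.L l (r • x) := Finset.inf'_le _ (Finset.mem_univ l)
        have h3 : |⟪P.u l, x⟫| ≤ Mu * ‖x‖ := by
          refine le_trans (abs_real_inner_le_norm _ _) ?_
          refine mul_le_mul_of_nonneg_right ?_ (norm_nonneg x)
          rw [hMu]
          exact Finset.le_sup' (fun l => ‖P.u l‖) (Finset.mem_univ l)
        have h4 : ε * (Mu * ‖x‖) < δ := by
          rw [hε, div_mul_eq_mul_div, div_lt_iff₀ hden]
          nlinarith
        have h5 : -(Mu * ‖x‖) ≤ ⟪P.u l, x⟫ := neg_le_of_abs_le h3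
        rw [hL]
        nlinarith [mul_le_mul_of_nonneg_left h5 hεpos.le]
      have hrε : r + ε ∈ T := ⟨by linarith, hmem⟩
      have := le_csSup hTb hrε
      linarith
    obtain ⟨l, hl⟩ := hactive
    refine Set.mem_iUnion.2 ⟨l, ⟨(r⁻¹, r • x), ⟨⟨?_, ?_⟩, ⟨hry, hl⟩⟩, ?_⟩⟩
    · positivity
    · exact inv_le_one_of_one_le₀ hr1
    · show r⁻¹ • (r • x) = x
      rw [smul_smul, inv_mul_cancel₀ hrpos.ne', one_smul]

/-- One-dimensional fiber integral. -/
lemma fiber_integral (m : ℕ) (c β : ℝ) (hc : 0 < c) (hβ : 0 < β) :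
    ∫ t in Set.Ioc (0:ℝ) 1, c * t ^ m * ((1 + t * (β - 1)) ^ (m + 2))⁻¹
      = c / (m + 1) * (β ^ (m + 1))⁻¹ := by
  have h2 : ∀ t ∈ Set.Icc (0:ℝ) 1, 0 < 1 + t * (β - 1) := by
    rintro t ⟨ht0, ht1⟩
    nlinarith [mul_nonneg (sub_nonneg.2 ht1) hβ.le, mul_nonneg ht0 hβ.le]
  have hm1 : ((m : ℝ) + 1) ≠ 0 := by positivity
  have hderiv : ∀ t ∈ Set.uIcc (0:ℝ) 1,
      HasDerivAt (fun t => c / (m+1) * (t^(m+1) * ((1 + t * (β - 1))^(m+1))⁻¹))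
        (c * t ^ m * ((1 + t * (β - 1)) ^ (m + 2))⁻¹) t := by
    intro t ht
    rw [Set.uIcc_of_le zero_le_one] at ht
    have hDt : (1 + t * (β - 1)) ≠ 0 := (h2 t ht).ne'
    have h1 : HasDerivAt (fun t : ℝ => 1 + t * (β - 1)) (β - 1) t := by
      simpa using ((hasDerivAt_id t).mul_const (β - 1)).const_add 1
    have hpow : HasDerivAt (fun t : ℝ => (1 + t * (β - 1))^(m+1))
        ((m+1) * (1 + t * (β - 1))^m * (β - 1)) t := by
      simpa using h1.fun_pow (m+1)
    have hinv : HasDerivAt (fun t : ℝ => ((1 + t * (β - 1))^(m+1))⁻¹)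
        (-((m+1) * (1 + t * (β - 1))^m * (β - 1)) / ((1 + t * (β - 1))^(m+1))^2) t :=
      hpow.inv (pow_ne_zero _ hDt)
    have hT : HasDerivAt (fun t : ℝ => t^(m+1)) ((m+1) * t^m) t := by
      simpa using hasDerivAt_pow (m+1) t
    have hmul := (hT.fun_mul hinv).const_mul (c / (m+1))
    convert hmul using 1
    case e'_4 => rfl
    case e'_5 => rfl
    have hne2 : (1 + t * (β - 1))^(m+1) ≠ 0 := pow_ne_zero _ hDt
    field_simp
    ring
  have hint : IntervalIntegrable (fun t => c * t^m * ((1 + t * (β - 1))^(m+2))⁻¹)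
      MeasureTheory.volume 0 1 := by
    apply ContinuousOn.intervalIntegrable
    rw [Set.uIcc_of_le zero_le_one]
    apply ContinuousOn.mul
    · exact (continuous_const.mul (continuous_pow m)).continuousOn
    · apply ContinuousOn.inv₀
      · exact (ContinuousOn.pow (by fun_prop) _)
      · intro t ht
        exact pow_ne_zero _ (h2 t ht).ne'
  have hFTC := intervalIntegral.integral_eq_sub_of_hasDerivAt hderiv hint
  rw [intervalIntegral.integral_of_le zero_le_one] at hFTC
  rw [hFTC]
  norm_num

/-- The coordinate model of the cone integral computation. -/
lemma core_cone_integral (m : ℕ) (c : ℝ) (hc : 0 < c) (K : Set (Fin m → ℝ))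
    (hK : IsCompact K) (a : Fin (m + 1) → ℝ)
    (hpos : ∀ z ∈ K, 0 < 1 + ∑ i, a i * (Fin.cons (-c) z : Fin (m+1) → ℝ) i) :
    ∫ w in (fun w : Fin (m+1) → ℝ =>
        (fun i => if i = 0 then -c * w 0 else w 0 * w i : Fin (m+1) → ℝ)) ''
          {w : Fin (m+1) → ℝ | w 0 ∈ Set.Ioc (0:ℝ) 1 ∧ Fin.tail w ∈ K},
        ((1 + ∑ i, a i * w i) ^ (m + 2))⁻¹
      = c / (m + 1) *
        ∫ z in K, ((1 + ∑ i, a i * (Fin.cons (-c) z : Fin (m+1) → ℝ) i) ^ (m + 1))⁻¹ := by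
  classical
  set γ : (Fin (m+1) → ℝ) → ℝ := fun w => 1 + ∑ i, a i * w i with hγ
  set β : (Fin m → ℝ) → ℝ := fun z => γ (Fin.cons (-c) z) with hβdef
  set G : (Fin (m+1) → ℝ) → (Fin (m+1) → ℝ) :=
    fun w => (fun i => if i = 0 then -c * w 0 else w 0 * w i) with hG
  set S : Set (Fin (m+1) → ℝ) := {w | w 0 ∈ Set.Ioc (0:ℝ) 1 ∧ Fin.tail w ∈ K} with hS
  set π := MeasurableEquiv.piFinSuccAbove (fun _ : Fin (m+1) => ℝ) 0 with hπ
  have hKm : MeasurableSet K := hK.isClosed.measurableSet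
  have htail : ∀ w : Fin (m+1) → ℝ, (fun j => w ((0 : Fin (m+1)).succAbove j)) = Fin.tail w := by
    intro w
    funext j
    simp [Fin.succAbove_zero, Fin.tail]
  have hπw : ∀ w : Fin (m+1) → ℝ, π w = (w 0, Fin.tail w) := by
    intro w
    rw [hπ]
    simp only [MeasurableEquiv.piFinSuccAbove_apply]
    simp [Fin.insertNthEquiv, Fin.removeNth_zero]
  have hSeq : S = π ⁻¹' (Set.Ioc (0:ℝ) 1 ×ˢ K) := by
    ext w
    simp [hS, hπw w, Set.mem_prod]
  have hSm : MeasurableSet S := by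
    rw [hSeq]
    exact π.measurable (measurableSet_Ioc.prod hKm)
  -- derivative
  set G' : (Fin (m+1) → ℝ) → ((Fin (m+1) → ℝ) →L[ℝ] (Fin (m+1) → ℝ)) := fun w =>
    ContinuousLinearMap.pi (fun i => if i = 0 then (-c) • (ContinuousLinearMap.proj 0)
      else w 0 • ContinuousLinearMap.proj i + w i • ContinuousLinearMap.proj 0) with hG'
  have hasfd : ∀ w, HasFDerivAt G (G' w) w := by
    intro w
    rw [hG']
    refine hasFDerivAt_pi'.2 fun i => ?_
    rw [ContinuousLinearMap.proj_pi]
    by_cases hi : i = 0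
    · subst hi
      simp only [hG, if_pos rfl]
      exact ((ContinuousLinearMap.proj (R := ℝ) (φ := fun _ : Fin (m+1) => ℝ)
        0).hasFDerivAt).const_mul (-c)
    · simp only [hG, if_neg hi]
      exact ((ContinuousLinearMap.proj (R := ℝ) (φ := fun _ : Fin (m+1) => ℝ)
        0).hasFDerivAt).mul ((ContinuousLinearMap.proj (R := ℝ)
          (φ := fun _ : Fin (m+1) => ℝ) i).hasFDerivAt)
  have hdet : ∀ w, (G' w).det = -c * (w 0) ^ m := by
    intro w
    have h1 : (G' w).det = LinearMap.det ((G' w) : (Fin (m+1) → ℝ) →ₗ[ℝ] (Fin (m+1) → ℝ)) := rfl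
    rw [h1, ← LinearMap.det_toMatrix']
    set M := LinearMap.toMatrix' ((G' w) : (Fin (m+1) → ℝ) →ₗ[ℝ] (Fin (m+1) → ℝ)) with hM
    have hMe : ∀ i j, M i j = (if i = 0 then -c * (if (0:Fin (m+1)) = j then 1 else 0)
        else w 0 * (if i = j then 1 else 0) + w i * (if (0:Fin (m+1)) = j then 1 else 0)) := by
      intro i j
      rw [hM, LinearMap.toMatrix'_apply]
      simp only [hG', ContinuousLinearMap.coe_coe, ContinuousLinearMap.pi_apply]
      by_cases hi : i = 0
      · subst hi
        simp [ContinuousLinearMap.proj_apply, eq_comm, Pi.single_apply]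
      · simp [hi, ContinuousLinearMap.proj_apply, eq_comm, Pi.single_apply]
    have htri : M.BlockTriangular OrderDual.toDual := by
      intro i j hij
      have hij' : i < j := hij
      have hj0 : (0 : Fin (m+1)) ≠ j := (lt_of_le_of_lt (Fin.zero_le i) hij').ne
      have hij'' : i ≠ j := hij'.ne
      rw [hMe i j]
      by_cases hi : i = 0 <;> simp [hi, hj0, hij'']
    rw [Matrix.det_of_lowerTriangular M htri]
    rw [Fin.prod_univ_succ]
    have hd0 : M 0 0 = -c := by rw [hMe]; simp
    have hds : ∀ j : Fin m, M j.succ j.succ = w 0 := by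
      intro j
      rw [hMe]
      simp [Fin.succ_ne_zero j, (Fin.succ_ne_zero j).symm]
    rw [hd0]
    congr 1
    calc ∏ j : Fin m, M j.succ j.succ = ∏ _j : Fin m, w 0 := by
          exact Finset.prod_congr rfl fun j _ => hds j
      _ = (w 0) ^ m := by simp [Finset.prod_const]
  -- injectivity
  have hcne : (-c : ℝ) ≠ 0 := by simpa using hc.ne'
  have hinj : Set.InjOn G S := by
    intro w hw w' hw' heq
    have h0 : w 0 = w' 0 := by
      have := congrFun heq 0
      simp only [hG, if_pos rfl] at this
      exact mul_left_cancel₀ hcne this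
    have hw0 : w 0 ≠ 0 := (hw.1.1).ne'
    funext i
    by_cases hi : i = 0
    · rw [hi]; exact h0
    · have := congrFun heq i
      simp only [hG, if_neg hi] at this
      rw [← h0] at this
      exact mul_left_cancel₀ hw0 this
  -- change of variables
  have hcv := integral_image_eq_integral_abs_det_fderiv_smul volume hSm
    (fun x _ => (hasfd x).hasFDerivWithinAt) hinj (fun w => ((γ w) ^ (m + 2))⁻¹)
  rw [show (∫ w in (fun w : Fin (m+1) → ℝ =>
        (fun i => if i = 0 then -c * w 0 else w 0 * w i : Fin (m+1) → ℝ)) ''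
          {w : Fin (m+1) → ℝ | w 0 ∈ Set.Ioc (0:ℝ) 1 ∧ Fin.tail w ∈ K},
        ((1 + ∑ i, a i * w i) ^ (m + 2))⁻¹) = ∫ w in G '' S, ((γ w) ^ (m + 2))⁻¹ from rfl, hcv]
  -- pointwise rewrite of the integrand on S
  have hhom : ∀ (t : ℝ) (v : Fin (m+1) → ℝ), γ (t • v) = 1 + t * (γ v - 1) := by
    intro t v
    simp only [hγ]
    have hsum : ∑ i, a i * (t • v) i = t * ∑ i, a i * v i := by
      rw [Finset.mul_sum]
      exact Finset.sum_congr rfl fun i _ => by simp [smul_eq_mul]; ring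
    rw [hsum]
    ring
  have hGsmul : ∀ w : Fin (m+1) → ℝ, G w = w 0 • (Fin.cons (-c) (Fin.tail w) : Fin (m+1) → ℝ) := by
    intro w
    funext i
    refine Fin.cases ?_ ?_ i
    · simp only [hG, if_pos rfl, Pi.smul_apply, Fin.cons_zero, smul_eq_mul]
      ring
    · intro j
      simp only [hG, if_neg (Fin.succ_ne_zero j), Pi.smul_apply, Fin.cons_succ, smul_eq_mul]
      rfl
  have hGγ : ∀ w : Fin (m+1) → ℝ, γ (G w) = 1 + w 0 * (β (Fin.tail w) - 1) := by
    intro w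
    rw [hGsmul w, hhom]
  set FF : ℝ × (Fin m → ℝ) → ℝ :=
    fun p => c * p.1 ^ m * ((1 + p.1 * (β p.2 - 1)) ^ (m + 2))⁻¹ with hFF
  have hcong : ∀ w ∈ S, |(G' w).det| • ((γ (G w)) ^ (m+2))⁻¹ = FF (π w) := by
    intro w hw
    have hw0 : 0 < w 0 := hw.1.1
    rw [hdet w, hGγ w, hπw w, hFF]
    simp only [smul_eq_mul]
    rw [abs_mul, abs_neg, abs_of_pos hc, abs_of_pos (pow_pos hw0 m)]
  rw [setIntegral_congr_fun hSm hcong]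
  have hmp : MeasurePreserving π volume volume := by
    rw [hπ]
    exact volume_preserving_piFinSuccAbove (fun _ : Fin (m+1) => ℝ) 0
  rw [hSeq]
  rw [hmp.setIntegral_preimage_emb π.measurableEmbedding FF (Set.Ioc (0:ℝ) 1 ×ˢ K)]
  -- integrability
  have hγc : Continuous γ := by
    rw [hγ]
    exact continuous_const.add (continuous_finset_sum _ fun i _ =>
      continuous_const.mul (continuous_apply i))
  have hcons : Continuous (fun z : Fin m → ℝ => (Fin.cons (-c) z : Fin (m+1) → ℝ)) := by
    refine continuous_pi fun i => ?_
    refine Fin.cases ?_ ?_ i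
    · simp only [Fin.cons_zero]
      exact continuous_const
    · intro j
      simp only [Fin.cons_succ]
      exact continuous_apply j
  have hβc : Continuous β := hγc.comp hcons
  have hden : ∀ p : ℝ × (Fin m → ℝ), p ∈ Set.Icc (0:ℝ) 1 ×ˢ K → 0 < 1 + p.1 * (β p.2 - 1) := by
    rintro ⟨t, z⟩ ⟨⟨ht0, ht1⟩, hz⟩
    have hβz : 0 < β z := hpos z hz
    nlinarith [mul_nonneg (sub_nonneg.2 ht1) hβz.le, mul_nonneg ht0 hβz.le]
  have hFFc : ContinuousOn FF (Set.Icc (0:ℝ) 1 ×ˢ K) := by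
    rw [hFF]
    apply ContinuousOn.mul
    · exact (continuous_const.mul ((continuous_fst.pow m))).continuousOn
    · apply ContinuousOn.inv₀
      · exact (continuous_const.add (continuous_fst.mul
          ((hβc.comp continuous_snd).sub continuous_const))).continuousOn.pow _
      · intro p hp
        exact pow_ne_zero _ (hden p hp).ne'
  have hInt : IntegrableOn FF (Set.Ioc (0:ℝ) 1 ×ˢ K) volume := by
    refine (hFFc.integrableOn_compact (isCompact_Icc.prod hK)).mono_set ?_
    exact Set.prod_mono Set.Ioc_subset_Icc_self subset_rfl
  rw [Measure.volume_eq_prod] at hInt ⊢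
  have hInt' : Integrable FF ((volume.restrict (Set.Ioc (0:ℝ) 1)).prod (volume.restrict K)) := by
    rw [Measure.prod_restrict]
    exact hInt
  rw [← Measure.prod_restrict]
  rw [integral_prod_symm FF hInt']
  have hinner : ∀ z ∈ K, (∫ t in Set.Ioc (0:ℝ) 1, FF (t, z)) = c / (m+1) * ((β z) ^ (m+1))⁻¹ := by
    intro z hz
    rw [hFF]
    exact fiber_integral m c (β z) hc (hpos z hz)
  rw [setIntegral_congr_fun hKm hinner]
  rw [MeasureTheory.integral_const_mul]


/-- Comparison of a parametrized surface (Lebesgue) integral with the Hausdorff-measure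
integral, via the easy direction of the Lipschitz comparison. -/
lemma hausdorff_step {m : ℕ} {K : Set (Fin m → ℝ)} (hK : IsCompact K)
    (j : (Fin m → ℝ) → EuclideanSpace ℝ (Fin (m + 1)))
    (s : EuclideanSpace ℝ (Fin (m + 1)) → (Fin m → ℝ)) (κ : NNReal)
    (hj : LipschitzWith κ j) (hs : LipschitzWith 1 s) (hsj : ∀ z, s (j z) = z)
    (f : EuclideanSpace ℝ (Fin (m + 1)) → ℝ) (hfm : Measurable f)
    (hf0 : ∀ x ∈ j '' K, 0 ≤ f x) (M : ℝ) (hfM : ∀ x ∈ j '' K, f x ≤ M) :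
    ∫ z in K, f (j z) ≤ ∫ x, f x ∂((μH[(m : ℝ)]).restrict (j '' K)) := by
  have hKm : MeasurableSet K := hK.isClosed.measurableSet
  have hjc : Continuous j := hj.continuous
  have hjK : IsCompact (j '' K) := hK.image hjc
  have hjKm : MeasurableSet (j '' K) := hjK.isClosed.measurableSet
  have hmd : (0:ℝ) ≤ (m:ℝ) := Nat.cast_nonneg m
  have hvol : (μH[(m:ℝ)] : Measure (Fin m → ℝ)) = volume := by
    rw [← hausdorffMeasure_pi_real (ι := Fin m)]
    congr 1
    simp
  have hle : (volume.restrict K).map j ≤ (μH[(m : ℝ)]).restrict (j '' K) := by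
    refine Measure.le_intro fun A hA _ => ?_
    rw [Measure.map_apply hjc.measurable hA, Measure.restrict_apply (hjc.measurable hA),
      Measure.restrict_apply hA, ← hvol]
    have hid : s ∘ j = id := funext hsj
    have h2 : j ⁻¹' A ∩ K = s '' (j '' (j ⁻¹' A ∩ K)) := by
      rw [← Set.image_comp, hid, Set.image_id]
    rw [h2]
    calc μH[(m:ℝ)] (s '' (j '' (j ⁻¹' A ∩ K)))
        ≤ (1 : NNReal) ^ (m:ℝ) * μH[(m:ℝ)] (j '' (j ⁻¹' A ∩ K)) :=
          hs.hausdorffMeasure_image_le hmd _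
      _ = μH[(m:ℝ)] (j '' (j ⁻¹' A ∩ K)) := by simp
      _ ≤ μH[(m:ℝ)] (A ∩ j '' K) := by
          apply measure_mono
          rintro _ ⟨z, ⟨hzA, hzK⟩, rfl⟩
          exact ⟨hzA, ⟨z, hzK, rfl⟩⟩
  have hFfin : μH[(m:ℝ)] (j '' K) ≠ ∞ := by
    have h1 := hj.hausdorffMeasure_image_le hmd K
    rw [hvol] at h1
    exact ne_of_lt (lt_of_le_of_lt h1 (ENNReal.mul_lt_top
      (ENNReal.rpow_lt_top_of_nonneg hmd ENNReal.coe_ne_top) hK.measure_lt_top))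
  have hL1 : ∫ z in K, f (j z) ∂volume = ∫ x, f x ∂((volume.restrict K).map j) :=
    (integral_map hjc.measurable.aemeasurable hfm.aestronglyMeasurable).symm
  have hf0' : 0 ≤ᵐ[(volume.restrict K).map j] f := by
    refine (ae_map_iff hjc.measurable.aemeasurable
      (measurableSet_le measurable_const hfm)).2 ?_
    exact (ae_restrict_iff' hKm).2 (Filter.Eventually.of_forall fun z hz => hf0 _ ⟨z, hz, rfl⟩)
  have hf0'' : 0 ≤ᵐ[(μH[(m : ℝ)]).restrict (j '' K)] f :=
    (ae_restrict_iff' hjKm).2 (Filter.Eventually.of_forall fun x hx => hf0 x hx)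
  have hL2 : ∫ x, f x ∂((volume.restrict K).map j)
      = (∫⁻ x, ENNReal.ofReal (f x) ∂((volume.restrict K).map j)).toReal :=
    integral_eq_lintegral_of_nonneg_ae hf0' hfm.aestronglyMeasurable
  have hL3 : ∫ x, f x ∂((μH[(m : ℝ)]).restrict (j '' K))
      = (∫⁻ x, ENNReal.ofReal (f x) ∂((μH[(m : ℝ)]).restrict (j '' K))).toReal :=
    integral_eq_lintegral_of_nonneg_ae hf0'' hfm.aestronglyMeasurable
  have hlint : ∫⁻ x, ENNReal.ofReal (f x) ∂((volume.restrict K).map j)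
      ≤ ∫⁻ x, ENNReal.ofReal (f x) ∂((μH[(m : ℝ)]).restrict (j '' K)) :=
    lintegral_mono' hle le_rfl
  have hb : ∀ᵐ x ∂((μH[(m : ℝ)]).restrict (j '' K)),
      ENNReal.ofReal (f x) ≤ ENNReal.ofReal (max M 0) :=
    (ae_restrict_iff' hjKm).2 (Filter.Eventually.of_forall fun x hx =>
      ENNReal.ofReal_le_ofReal (le_max_of_le_left (hfM x hx)))
  have hbound : ∫⁻ x, ENNReal.ofReal (f x) ∂((μH[(m : ℝ)]).restrict (j '' K))
      ≤ ENNReal.ofReal (max M 0) * μH[(m:ℝ)] (j '' K) := by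
    refine le_trans (lintegral_mono_ae hb) ?_
    rw [lintegral_const, Measure.restrict_apply_univ]
  have hfin2 : ∫⁻ x, ENNReal.ofReal (f x) ∂((μH[(m : ℝ)]).restrict (j '' K)) ≠ ∞ :=
    ne_of_lt (lt_of_le_of_lt hbound
      (ENNReal.mul_lt_top ENNReal.ofReal_lt_top (lt_top_iff_ne_top.2 hFfin)))
  rw [hL1, hL2, hL3]
  exact ENNReal.toReal_mono hfin2 hlint

/-- The key per-facet inequality. -/
lemma key_facet (P : LabeledPolytope n d) (hP : P.IsLabeledPolytope)
    (h0 : (0 : EuclideanSpace ℝ (Fin n)) ∈ interior P.Delta)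
    (b' : EuclideanSpace ℝ (Fin n)) (hb' : b' ∈ P.Omega) (l : Fin d) :
    ∫ x in P.coneSet l, ((bval (1, b') x) ^ (n + 1))⁻¹
      ≤ P.lam l / n * ∫ μ, ((bval (1, b') μ) ^ n)⁻¹ ∂(P.facetMeasure l) := by
  classical
  obtain ⟨m, rfl⟩ : ∃ m, n = m + 1 := ⟨n - 1, by have := hP.npos; omega⟩
  have h0' : (0 : EuclideanSpace ℝ (Fin (m+1))) ∈ P.Delta := interior_subset h0
  have hu : P.u l ≠ 0 := P.u_ne_zero hP l
  have hnu : 0 < ‖P.u l‖ := norm_pos_iff.2 hu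
  have hlam : 0 < P.lam l := P.lam_pos hP h0 l
  set c : ℝ := P.lam l / ‖P.u l‖ with hcdef
  have hc : 0 < c := by positivity
  set e : EuclideanSpace ℝ (Fin (m+1)) := ‖P.u l‖⁻¹ • P.u l with he
  have he1 : ‖e‖ = 1 := by rw [he]; exact norm_smul_inv_norm hu
  obtain ⟨B, hB0⟩ : ∃ B : OrthonormalBasis (Fin (m+1)) ℝ (EuclideanSpace ℝ (Fin (m+1))),
      B 0 = e := by
    have hcard : Module.finrank ℝ (EuclideanSpace ℝ (Fin (m+1))) = Fintype.card (Fin (m+1)) := by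
      simp [finrank_euclideanSpace_fin]
    have ho : Orthonormal ℝ (({0} : Set (Fin (m+1))).restrict (fun _ => e)) := by
      constructor
      · intro i
        simp [Set.restrict, he1]
      · intro i j hij
        exfalso
        apply hij
        have hi := i.2
        have hj := j.2
        simp only [Set.mem_singleton_iff] at hi hj
        exact Subtype.ext (hi.trans hj.symm)
    obtain ⟨B, hB⟩ := ho.exists_orthonormalBasis_extension_of_card_eq hcard
    exact ⟨B, hB 0 rfl⟩
  set ψ : EuclideanSpace ℝ (Fin (m+1)) ≃ᵐ (Fin (m+1) → ℝ) :=
    (B.repr.toHomeomorph.toMeasurableEquiv).trans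
      (MeasurableEquiv.toLp 2 (Fin (m+1) → ℝ)).symm with hψdef
  have hψx : ∀ (x : EuclideanSpace ℝ (Fin (m+1))) (i : Fin (m+1)), ψ x i = ⟪B i, x⟫ := by
    intro x i
    rw [← B.repr_apply_apply]
    rfl
  have hψmp : MeasurePreserving ψ volume volume := by
    have h1 : MeasurePreserving B.repr volume volume := B.measurePreserving_repr
    have h2 := EuclideanSpace.volume_preserving_symm_measurableEquiv_toLp (Fin (m+1))
    exact h2.comp h1
  have hψsmul : ∀ (t : ℝ) (x : EuclideanSpace ℝ (Fin (m+1))), ψ (t • x) = t • ψ x := by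
    intro t x
    funext i
    rw [Pi.smul_apply, hψx, hψx, real_inner_smul_right]
    rfl
  have hψsymm_cont : Continuous (⇑ψ.symm) := by
    have heq : ⇑ψ.symm = ⇑B.repr.symm ∘ ⇑(WithLp.equiv 2 (Fin (m+1) → ℝ)).symm := rfl
    rw [heq]
    exact B.repr.symm.continuous.comp (PiLp.continuous_toLp _ _)
  set j : (Fin m → ℝ) → EuclideanSpace ℝ (Fin (m+1)) :=
    fun z => ψ.symm (Fin.cons (-c) z) with hjdef
  set K : Set (Fin m → ℝ) := j ⁻¹' (P.Facet l) with hKdef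
  have hcons_cont : Continuous (fun z : Fin m → ℝ => (Fin.cons (-c) z : Fin (m+1) → ℝ)) := by
    refine continuous_pi fun i => ?_
    refine Fin.cases ?_ ?_ i
    · simp only [Fin.cons_zero]
      exact continuous_const
    · intro j'
      simp only [Fin.cons_succ]
      exact continuous_apply j'
  have hjcont : Continuous j := hψsymm_cont.comp hcons_cont
  have hψjz : ∀ z, ψ (j z) = Fin.cons (-c) z := by
    intro z
    rw [hjdef]
    exact ψ.apply_symm_apply _
  have hψF : ∀ y ∈ P.Facet l, ψ y 0 = -c := by
    intro y hy
    rw [hψx, hB0, he, real_inner_smul_left]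
    have hinner : ⟪P.u l, y⟫ = - P.lam l := by
      have h2 := hy.2
      rw [L] at h2
      linarith
    rw [hinner, hcdef]
    field_simp
  have hconsψ : ∀ y ∈ P.Facet l, (Fin.cons (-c) (Fin.tail (ψ y)) : Fin (m+1) → ℝ) = ψ y := by
    intro y hy
    funext i
    refine Fin.cases ?_ ?_ i
    · rw [Fin.cons_zero, hψF y hy]
    · intro j'
      rw [Fin.cons_succ]
      rfl
  have hjK : ∀ z ∈ K, j z ∈ P.Facet l := fun z hz => hz
  have hFj : P.Facet l = j '' K := by
    apply Set.Subset.antisymm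
    · intro y hy
      refine ⟨Fin.tail (ψ y), ?_, ?_⟩
      · show j (Fin.tail (ψ y)) ∈ P.Facet l
        have : j (Fin.tail (ψ y)) = y := by
          rw [hjdef]
          simp only
          rw [hconsψ y hy, ψ.symm_apply_apply]
        rw [this]
        exact hy
      · show ψ.symm _ = y
        rw [hconsψ y hy, ψ.symm_apply_apply]
    · rintro _ ⟨z, hz, rfl⟩
      exact hz
  set a : Fin (m+1) → ℝ := fun i => B.repr b' i with ha
  have hγψ : ∀ x : EuclideanSpace ℝ (Fin (m+1)), 1 + ∑ i, a i * ψ x i = bval (1, b') x := by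
    intro x
    have hsum : ∑ i, a i * ψ x i = ⟪b', x⟫ := by
      have h1 : ∀ i, a i * ψ x i = ⟪b', B i⟫ * ⟪B i, x⟫ := by
        intro i
        rw [ha]
        simp only
        rw [hψx, B.repr_apply_apply, real_inner_comm b' (B i)]
      calc ∑ i, a i * ψ x i = ∑ i, ⟪b', B i⟫ * ⟪B i, x⟫ :=
            Finset.sum_congr rfl fun i _ => h1 i
        _ = ⟪b', x⟫ := B.sum_inner_mul_inner b' x
    rw [hsum]
    rfl
  obtain ⟨R, hR⟩ := hP.compact.isBounded.subset_closedBall 0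
  have hR0 : 0 ≤ R := by
    have := hR h0'
    simpa [Metric.mem_closedBall] using this
  have hKsub : K ⊆ Metric.closedBall 0 R := by
    intro z hz
    have hjz : j z ∈ P.Delta := (P.facet_subset l) (hjK z hz)
    have hjzR : ‖j z‖ ≤ R := by
      have := hR hjz
      simpa [Metric.mem_closedBall, dist_zero_right] using this
    rw [Metric.mem_closedBall, dist_zero_right]
    rw [pi_norm_le_iff_of_nonneg hR0]
    intro i
    have hzi : z i = ψ (j z) i.succ := by
      rw [hψjz z, Fin.cons_succ]
    rw [hzi, hψx]
    calc ‖⟪B i.succ, j z⟫‖ = |⟪B i.succ, j z⟫| := rfl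
      _ ≤ ‖B i.succ‖ * ‖j z‖ := abs_real_inner_le_norm _ _
      _ = ‖j z‖ := by rw [B.orthonormal.1 i.succ, one_mul]
      _ ≤ R := hjzR
  have hKclosed : IsClosed K := (P.facet_closed l).preimage hjcont
  have hKcompact : IsCompact K := by
    rw [Metric.isCompact_iff_isClosed_bounded]
    exact ⟨hKclosed, Metric.isBounded_closedBall.subset hKsub⟩
  have hKm : MeasurableSet K := hKclosed.measurableSet
  have hβpos : ∀ z ∈ K, 0 < 1 + ∑ i, a i * (Fin.cons (-c) z : Fin (m+1) → ℝ) i := by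
    intro z hz
    rw [← hψjz z, hγψ]
    exact hb' _ ((P.facet_subset l) (hjK z hz))
  -- the cone minus the apex
  set CIo : Set (EuclideanSpace ℝ (Fin (m+1))) :=
    (fun p : ℝ × EuclideanSpace ℝ (Fin (m+1)) => p.1 • p.2) ''
      (Set.Ioc (0:ℝ) 1 ×ˢ P.Facet l) with hCIo
  have hcone_split : P.coneSet l = CIo ∪ {0} := by
    ext x
    constructor
    · rintro ⟨⟨t, y⟩, ⟨⟨ht0, ht1⟩, hy⟩, rfl⟩
      rcases eq_or_lt_of_le ht0 with h | h
      · right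
        show (t, y).1 • (t, y).2 ∈ ({0} : Set (EuclideanSpace ℝ (Fin (m+1))))
        rw [Set.mem_singleton_iff, ← h, zero_smul]
      · left
        exact ⟨(t, y), ⟨⟨h, ht1⟩, hy⟩, rfl⟩
    · rintro (⟨⟨t, y⟩, ⟨⟨ht0, ht1⟩, hy⟩, rfl⟩ | h)
      · exact ⟨(t, y), ⟨⟨ht0.le, ht1⟩, hy⟩, rfl⟩
      · obtain ⟨y, hy⟩ := hP.facet_nonempty l
        refine ⟨(0, y), ⟨⟨le_refl 0, zero_le_one⟩, hy⟩, ?_⟩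
        rw [Set.mem_singleton_iff] at h
        simp [h]
  have h0vol : volume ({0} : Set (EuclideanSpace ℝ (Fin (m+1)))) = 0 := by
    have hps : ({0} : Set (EuclideanSpace ℝ (Fin (m+1)))) = ψ ⁻¹' {ψ 0} := by
      ext x
      simp only [Set.mem_singleton_iff, Set.mem_preimage]
      exact ⟨fun h => by rw [h], fun h => ψ.injective h⟩
    have hNA : NullSingletonClass (volume : Measure (Fin (m+1) → ℝ)) := by
      have : (volume : Measure (Fin (m+1) → ℝ)) = Measure.pi (fun _ => volume) := rfl
      rw [this]
      infer_instance
    rw [hps, hψmp.measure_preimage (measurableSet_singleton _).nullMeasurableSet]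
    exact measure_singleton _
  have hae : (CIo ∪ {0} : Set (EuclideanSpace ℝ (Fin (m+1)))) =ᵐ[volume] CIo := by
    refine (MeasureTheory.ae_eq_set.2 ⟨?_, ?_⟩)
    · refine measure_mono_null ?_ h0vol
      intro x hx
      exact hx.1.resolve_left hx.2
    · have : CIo \ (CIo ∪ {0}) = ∅ := Set.diff_eq_empty.2 Set.subset_union_left
      rw [this]
      exact measure_empty
  -- image identity
  have himg : ψ.symm '' ((fun w : Fin (m+1) → ℝ =>
      (fun i => if i = 0 then -c * w 0 else w 0 * w i : Fin (m+1) → ℝ)) ''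
        {w : Fin (m+1) → ℝ | w 0 ∈ Set.Ioc (0:ℝ) 1 ∧ Fin.tail w ∈ K}) = CIo := by
    apply Set.Subset.antisymm
    · rintro _ ⟨_, ⟨w, ⟨hw0, hwt⟩, rfl⟩, rfl⟩
      have hGw : (fun i => if i = 0 then -c * w 0 else w 0 * w i : Fin (m+1) → ℝ)
          = ψ (w 0 • j (Fin.tail w)) := by
        rw [hψsmul, hψjz]
        funext i
        refine Fin.cases ?_ ?_ i
        · simp only [if_pos rfl, if_true, Pi.smul_apply, Fin.cons_zero, smul_eq_mul]
          ring
        · intro j'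
          simp only [if_neg (Fin.succ_ne_zero j'), Pi.smul_apply, Fin.cons_succ, smul_eq_mul]
          rfl
      show ψ.symm (fun i => if i = 0 then -c * w 0 else w 0 * w i : Fin (m+1) → ℝ) ∈ CIo
      rw [hGw, ψ.symm_apply_apply]
      exact ⟨(w 0, j (Fin.tail w)), ⟨hw0, hjK _ hwt⟩, rfl⟩
    · rintro _ ⟨⟨t, y⟩, ⟨ht, hy⟩, rfl⟩
      refine ⟨ψ (t • y), ⟨Fin.cons t (Fin.tail (ψ y)), ⟨?_, ?_⟩, ?_⟩, ψ.symm_apply_apply _⟩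
      · rw [Fin.cons_zero]
        exact ht
      · rw [Fin.tail_cons]
        show j _ ∈ P.Facet l
        have : j (Fin.tail (ψ y)) = y := by
          rw [hjdef]
          simp only
          rw [hconsψ y hy, ψ.symm_apply_apply]
        rw [this]
        exact hy
      · rw [hψsmul]
        funext i
        refine Fin.cases ?_ ?_ i
        · simp only [if_pos rfl, if_true, Fin.cons_zero, Pi.smul_apply, smul_eq_mul]
          rw [hψF y hy]
          ring
        · intro j'
          simp only [if_neg (Fin.succ_ne_zero j'), Fin.cons_zero, Fin.cons_succ,
            Pi.smul_apply, smul_eq_mul]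
          rfl
  -- Lipschitz data
  have hσlip : LipschitzWith 1
      (fun x : EuclideanSpace ℝ (Fin (m+1)) => Fin.tail (ψ x)) := by
    have h1 : LipschitzWith 1 (⇑B.repr) := B.repr.isometry.lipschitz
    have h2 : LipschitzWith 1 (⇑(WithLp.equiv 2 (Fin (m+1) → ℝ))) :=
      PiLp.lipschitzWith_ofLp 2 _
    have h3 : LipschitzWith 1 (Fin.tail : (Fin (m+1) → ℝ) → (Fin m → ℝ)) := by
      apply LipschitzWith.of_dist_le_mul
      intro x y
      simp only [NNReal.coe_one, one_mul]
      rw [dist_pi_le_iff dist_nonneg]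
      intro i
      exact dist_le_pi_dist x y i.succ
    have heq : (fun x : EuclideanSpace ℝ (Fin (m+1)) => Fin.tail (ψ x))
        = (Fin.tail : (Fin (m+1) → ℝ) → (Fin m → ℝ)) ∘
          (⇑(WithLp.equiv 2 (Fin (m+1) → ℝ))) ∘ ⇑B.repr := rfl
    rw [heq]
    simpa using (h3.comp (h2.comp h1))
  obtain ⟨κ, hκj⟩ : ∃ κ : NNReal, LipschitzWith κ j := by
    have h2 : LipschitzWith 1 (⇑B.repr.symm) := B.repr.symm.isometry.lipschitz
    obtain ⟨κ₀, hκ₀⟩ : ∃ κ₀ : NNReal,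
        LipschitzWith κ₀ (⇑(WithLp.equiv 2 (Fin (m+1) → ℝ)).symm) := by
      have ha := PiLp.antilipschitzWith_ofLp 2 (fun _ : Fin (m+1) => ℝ)
      refine ⟨(Fintype.card (Fin (m+1)) : NNReal) ^ ((1 : ℝ≥0∞) / 2).toReal,
        fun x y => ?_⟩
      have h := ha ((WithLp.equiv 2 (Fin (m+1) → ℝ)).symm x)
        ((WithLp.equiv 2 (Fin (m+1) → ℝ)).symm y)
      simpa using h
    have h3 : LipschitzWith 1 (fun z : Fin m → ℝ => (Fin.cons (-c) z : Fin (m+1) → ℝ)) := by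
      apply LipschitzWith.of_dist_le_mul
      intro x y
      simp only [NNReal.coe_one, one_mul]
      rw [dist_pi_le_iff dist_nonneg]
      intro i
      refine Fin.cases ?_ ?_ i
      · simpa [Fin.cons_zero] using dist_nonneg
      · intro j'
        simp only [Fin.cons_succ]
        exact dist_le_pi_dist x y j'
    refine ⟨1 * (κ₀ * 1), ?_⟩
    have heq : j = ⇑B.repr.symm ∘ ⇑(WithLp.equiv 2 (Fin (m+1) → ℝ)).symm ∘
        (fun z : Fin m → ℝ => (Fin.cons (-c) z : Fin (m+1) → ℝ)) := rfl
    rw [heq]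
    exact h2.comp (hκ₀.comp h3)
  have hσj : ∀ z, (fun x : EuclideanSpace ℝ (Fin (m+1)) => Fin.tail (ψ x)) (j z) = z := by
    intro z
    simp only
    rw [hψjz z, Fin.tail_cons]
  -- bounds for f on the facet
  have hbc : Continuous (fun x : EuclideanSpace ℝ (Fin (m+1)) => bval (1, b') x) :=
    continuous_const.add (continuous_const.inner continuous_id)
  have hfm : Measurable (fun x : EuclideanSpace ℝ (Fin (m+1)) =>
      ((bval (1, b') x) ^ (m+1))⁻¹) := ((hbc.pow (m+1)).measurable).inv
  obtain ⟨x₀, hx₀, hmin⟩ := (P.facet_compact hP l).exists_isMinOn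
    (hP.facet_nonempty l) hbc.continuousOn
  have hx₀pos : 0 < bval (1, b') x₀ := hb' _ ((P.facet_subset l) hx₀)
  have hf0 : ∀ x ∈ j '' K, 0 ≤ ((bval (1, b') x) ^ (m+1))⁻¹ := by
    intro x hx
    rw [← hFj] at hx
    have := hb' _ ((P.facet_subset l) hx)
    positivity
  have hfM : ∀ x ∈ j '' K, ((bval (1, b') x) ^ (m+1))⁻¹
      ≤ ((bval (1, b') x₀) ^ (m+1))⁻¹ := by
    intro x hx
    rw [← hFj] at hx
    have h1 : 0 < bval (1, b') x := hb' _ ((P.facet_subset l) hx)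
    exact inv_anti₀ (by positivity) (pow_le_pow_left₀ hx₀pos.le (hmin hx) _)
  have hHaus := hausdorff_step hKcompact j _ κ hκj hσlip hσj
    (fun x => ((bval (1, b') x) ^ (m+1))⁻¹) hfm hf0 _ hfM
  -- assemble
  have hcore := core_cone_integral m c hc K hKcompact a hβpos
  have hψsmp : MeasurePreserving (⇑ψ.symm) volume volume := hψmp.symm _
  calc ∫ x in P.coneSet l, ((bval (1, b') x) ^ (m + 1 + 1))⁻¹
      = ∫ x in CIo, ((bval (1, b') x) ^ (m + 1 + 1))⁻¹ := by
        rw [hcone_split]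
        exact setIntegral_congr_set hae
    _ = ∫ w in (fun w : Fin (m+1) → ℝ =>
          (fun i => if i = 0 then -c * w 0 else w 0 * w i : Fin (m+1) → ℝ)) ''
            {w : Fin (m+1) → ℝ | w 0 ∈ Set.Ioc (0:ℝ) 1 ∧ Fin.tail w ∈ K},
          ((1 + ∑ i, a i * w i) ^ (m + 2))⁻¹ := by
        rw [← himg, hψsmp.setIntegral_image_emb ψ.symm.measurableEmbedding]
        refine integral_congr_ae (Filter.Eventually.of_forall fun w => ?_)
        show ((bval (1, b') (ψ.symm w)) ^ (m + 1 + 1))⁻¹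
          = ((1 + ∑ i, a i * w i) ^ (m + 2))⁻¹
        rw [← hγψ (ψ.symm w)]
        have : ∀ i, ψ (ψ.symm w) i = w i := fun i => by rw [ψ.apply_symm_apply]
        simp only [this]
    _ = c / (m + 1) * ∫ z in K,
          ((1 + ∑ i, a i * (Fin.cons (-c) z : Fin (m+1) → ℝ) i) ^ (m + 1))⁻¹ := hcore
    _ = c / (m + 1) * ∫ z in K, ((bval (1, b') (j z)) ^ (m + 1))⁻¹ := by
        congr 1
        refine setIntegral_congr_fun hKm fun z hz => ?_
        rw [← hψjz z, hγψ]
    _ ≤ c / (m + 1) * ∫ x, ((bval (1, b') x) ^ (m+1))⁻¹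
          ∂((μH[(m : ℝ)]).restrict (j '' K)) := by
        refine mul_le_mul_of_nonneg_left hHaus (by positivity)
    _ = P.lam l / (↑(m + 1)) * ∫ μ, ((bval (1, b') μ) ^ (m + 1))⁻¹ ∂(P.facetMeasure l) := by
        have hfm_eq : P.facetMeasure l = (ENNReal.ofReal ‖P.u l‖⁻¹) •
            (μH[((m + 1 : ℕ) : ℝ) - 1]).restrict (P.Facet l) := rfl
        have hexp : ((m + 1 : ℕ) : ℝ) - 1 = (m : ℝ) := by push_cast; ring
        rw [hfm_eq, integral_smul_measure,
          ENNReal.toReal_ofReal (inv_nonneg.2 hnu.le), hexp, hFj, smul_eq_mul]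
        rw [hcdef]
        push_cast
        ring

lemma facet_int_nonneg (P : LabeledPolytope n d)
    (b' : EuclideanSpace ℝ (Fin n)) (hb' : b' ∈ P.Omega) (l : Fin d) :
    0 ≤ ∫ μ, ((bval (1, b') μ) ^ n)⁻¹ ∂(P.facetMeasure l) := by
  apply integral_nonneg_of_ae
  refine Measure.ae_smul_measure ?_ _
  refine ((ae_restrict_iff' (P.facet_closed l).measurableSet).2
    (Filter.Eventually.of_forall fun x hx => ?_))
  have hpos : 0 < bval (1, b') x := hb' x hx.1
  positivity

lemma W00_le (P : LabeledPolytope n d) (hP : P.IsLabeledPolytope)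
    (h0 : (0 : EuclideanSpace ℝ (Fin n)) ∈ interior P.Delta)
    (b' : EuclideanSpace ℝ (Fin n)) (hb' : b' ∈ P.Omega)
    (lamMax : ℝ) (hle : ∀ l, P.L l 0 ≤ lamMax) (hmem : ∃ l, lamMax = P.L l 0) :
    P.W00 (1, b') ≤ lamMax / n * (P.Z0 (1, b') / 2) := by
  obtain ⟨l₀, _⟩ := hmem
  have hd : Nonempty (Fin d) := ⟨l₀⟩
  have h0' : (0 : EuclideanSpace ℝ (Fin n)) ∈ P.Delta := interior_subset h0
  have hbc : Continuous (fun x : EuclideanSpace ℝ (Fin n) => bval (1, b') x) :=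
    continuous_const.add (continuous_const.inner continuous_id)
  set g : EuclideanSpace ℝ (Fin n) → ℝ := fun x => ((bval (1, b') x) ^ (n+1))⁻¹ with hg
  have hgm : MeasurableSet P.Delta := P.delta_closed.measurableSet
  have hgc : ContinuousOn g P.Delta := by
    apply ContinuousOn.inv₀
    · exact hbc.continuousOn.pow _
    · intro x hx
      exact pow_ne_zero _ (hb' x hx).ne'
  have hint : IntegrableOn g P.Delta := hgc.integrableOn_compact hP.compact
  have hc_sub : ∀ l, P.coneSet l ⊆ P.Delta := fun l => P.coneSet_subset h0' l
  have hCm : ∀ l, MeasurableSet (P.coneSet l) := fun l => (P.coneSet_compact hP l).measurableSet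
  have hintC : ∀ l, IntegrableOn g (P.coneSet l) := fun l => hint.mono_set (hc_sub l)
  have hgnonneg : ∀ x ∈ P.Delta, 0 ≤ g x := by
    intro x hx
    have := hb' x hx
    positivity
  have hindnn : ∀ (l : Fin d) x, 0 ≤ Set.indicator (P.coneSet l) g x := fun l x =>
    Set.indicator_nonneg (fun y hy => hgnonneg y (hc_sub l hy)) x
  have hpt : ∀ x, Set.indicator P.Delta g x ≤ ∑ l, Set.indicator (P.coneSet l) g x := by
    intro x
    by_cases hx : x ∈ P.Delta
    · rw [Set.indicator_of_mem hx]
      obtain ⟨l, hl⟩ := Set.mem_iUnion.1 (P.delta_subset_iUnion hP hx)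
      calc g x = Set.indicator (P.coneSet l) g x := (Set.indicator_of_mem hl g).symm
        _ ≤ ∑ l, Set.indicator (P.coneSet l) g x :=
          Finset.single_le_sum (fun l _ => hindnn l x) (Finset.mem_univ l)
    · rw [Set.indicator_of_notMem hx]
      exact Finset.sum_nonneg fun l _ => hindnn l x
  have hW : P.W00 (1, b') = ∫ x, Set.indicator P.Delta g x := by
    rw [integral_indicator hgm]
    rfl
  have hmono : P.W00 (1, b') ≤ ∑ l, ∫ x in P.coneSet l, g x := by
    rw [hW]
    calc ∫ x, Set.indicator P.Delta g x
        ≤ ∫ x, ∑ l, Set.indicator (P.coneSet l) g x := by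
          apply integral_mono (hint.integrable_indicator hgm) ?_ hpt
          exact integrable_finset_sum _ fun l _ => (hintC l).integrable_indicator (hCm l)
      _ = ∑ l, ∫ x, Set.indicator (P.coneSet l) g x :=
          integral_finset_sum _ fun l _ => (hintC l).integrable_indicator (hCm l)
      _ = ∑ l, ∫ x in P.coneSet l, g x := by
          refine Finset.sum_congr rfl fun l _ => ?_
          rw [integral_indicator (hCm l)]
  have hkey : ∀ l, ∫ x in P.coneSet l, g x
      ≤ lamMax / n * ∫ μ, ((bval (1, b') μ) ^ n)⁻¹ ∂(P.facetMeasure l) := by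
    intro l
    refine le_trans (P.key_facet hP h0 b' hb' l) ?_
    refine mul_le_mul_of_nonneg_right ?_ (P.facet_int_nonneg b' hb' l)
    have hll : P.lam l ≤ lamMax := by
      have := hle l
      simpa [L] using this
    have hn : (0:ℝ) < n := by exact_mod_cast hP.npos
    gcongr
  calc P.W00 (1, b') ≤ ∑ l, ∫ x in P.coneSet l, g x := hmono
    _ ≤ ∑ l, lamMax / n * ∫ μ, ((bval (1, b') μ) ^ n)⁻¹ ∂(P.facetMeasure l) :=
        Finset.sum_le_sum fun l _ => hkey l
    _ = lamMax / n * ∑ l, ∫ μ, ((bval (1, b') μ) ^ n)⁻¹ ∂(P.facetMeasure l) := by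
        rw [Finset.mul_sum]
    _ = lamMax / n * (P.Z0 (1, b') / 2) := by
        rw [Z0]
        ring

lemma W00_pos (P : LabeledPolytope n d) (hP : P.IsLabeledPolytope)
    (h0 : (0 : EuclideanSpace ℝ (Fin n)) ∈ interior P.Delta)
    (b' : EuclideanSpace ℝ (Fin n)) (hb' : b' ∈ P.Omega) :
    0 < P.W00 (1, b') := by
  have h0' : (0 : EuclideanSpace ℝ (Fin n)) ∈ P.Delta := interior_subset h0
  have hbpos : ∀ x ∈ P.Delta, 0 < bval (1, b') x := hb'
  have hbc : Continuous (fun x : EuclideanSpace ℝ (Fin n) => bval (1, b') x) :=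
    continuous_const.add (continuous_const.inner continuous_id)
  set g : EuclideanSpace ℝ (Fin n) → ℝ := fun x => ((bval (1, b') x) ^ (n+1))⁻¹ with hg
  have hgm : MeasurableSet P.Delta := P.delta_closed.measurableSet
  have hgc : ContinuousOn g P.Delta := by
    apply ContinuousOn.inv₀
    · exact hbc.continuousOn.pow _
    · intro x hx
      exact pow_ne_zero _ (hbpos x hx).ne'
  have hint : IntegrableOn g P.Delta := hgc.integrableOn_compact hP.compact
  obtain ⟨xM, hxM, hmax⟩ := hP.compact.exists_isMaxOn ⟨0, h0'⟩ hbc.continuousOn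
  have hM : 0 < bval (1, b') xM := hbpos _ hxM
  have hlow : ∀ x ∈ P.Delta, ((bval (1, b') xM) ^ (n+1))⁻¹ ≤ g x := by
    intro x hx
    have h1 : 0 < bval (1, b') x := hbpos x hx
    have h2 : bval (1, b') x ≤ bval (1, b') xM := hmax hx
    exact inv_anti₀ (by positivity) (pow_le_pow_left₀ h1.le h2 _)
  have key := setIntegral_ge_of_const_le hgm hP.compact.measure_lt_top.ne hlow hint
  have hvol : 0 < (volume P.Delta).toReal := by
    apply ENNReal.toReal_pos ?_ hP.compact.measure_lt_top.ne
    obtain ⟨ε, hε, hball⟩ := Metric.isOpen_iff.1 isOpen_interior 0 h0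
    have hle : volume (Metric.ball (0 : EuclideanSpace ℝ (Fin n)) ε) ≤ volume P.Delta :=
      measure_mono (le_trans hball interior_subset)
    exact fun hzero => ((Metric.measure_ball_pos volume 0 hε).trans_le hle).ne' hzero
  calc (0:ℝ) < ((bval (1, b') xM) ^ (n+1))⁻¹ * (volume P.Delta).toReal := by positivity
    _ ≤ ∫ x in P.Delta, g x := by rw [mul_comm]; exact key
    _ = P.W00 (1, b') := rfl

end LabeledPolytope

end Stmt8Aux


open LabeledPolytope in
/-- If `0` lies in the interior of `Δ` and `λ = max_l L_l(0)`, then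
`λ > 0` and for every `b ∈ Ω`: `F(b) ≥ (2n/λ)ⁿ · Z₀(b)`. -/
theorem stmt8 {n d : ℕ} (P : LabeledPolytope n d) (hP : P.IsLabeledPolytope)
    (h0 : (0 : EuclideanSpace ℝ (Fin n)) ∈ interior P.Delta)
    (lamMax : ℝ) (hle : ∀ l, P.L l 0 ≤ lamMax) (hmem : ∃ l, lamMax = P.L l 0) :
    0 < lamMax ∧
      ∀ b' ∈ P.Omega,
        (2 * (n : ℝ) / lamMax) ^ n * P.Z0 (1, b') ≤ P.Fcal b' := by
  obtain ⟨l₀, hl₀⟩ := hmem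
  have hn : (0 : ℝ) < n := by exact_mod_cast hP.npos
  have hd : Nonempty (Fin d) := ⟨l₀⟩
  have h0' : (0 : EuclideanSpace ℝ (Fin n)) ∈ P.Delta := interior_subset h0
  have hlam : 0 < lamMax := by
    have := P.lam_pos hP h0 l₀
    have hL : P.L l₀ 0 = P.lam l₀ := by simp [LabeledPolytope.L]
    rw [hl₀, hL]; exact this
  refine ⟨hlam, fun b' hb' => ?_⟩
  have hW : P.W00 (1, b') ≤ lamMax / n * (P.Z0 (1, b') / 2) :=
    P.W00_le hP h0 b' hb' lamMax hle ⟨l₀, hl₀⟩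
  have hWpos : 0 < P.W00 (1, b') := P.W00_pos hP h0 b' hb'
  set W := P.W00 (1, b') with hWdef
  set Z := P.Z0 (1, b') with hZdef
  have hc : 0 < 2 * (n : ℝ) / lamMax := by positivity
  have hZW : 2 * (n : ℝ) / lamMax * W ≤ Z := by
    have h2 : 2 * (n : ℝ) / lamMax * W ≤ 2 * (n : ℝ) / lamMax * (lamMax / n * (Z / 2)) :=
      mul_le_mul_of_nonneg_left hW hc.le
    calc 2 * (n : ℝ) / lamMax * W ≤ 2 * (n : ℝ) / lamMax * (lamMax / n * (Z / 2)) := h2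
      _ = Z := by field_simp
  have hZpos : 0 < Z := lt_of_lt_of_le (by positivity) hZW
  have h1 : (2 * (n : ℝ) / lamMax) ^ n * W ^ n ≤ Z ^ n := by
    rw [← mul_pow]
    exact pow_le_pow_left₀ (by positivity) hZW n
  have h2 : (2 * (n : ℝ) / lamMax) ^ n * W ^ n * Z ≤ Z ^ n * Z :=
    mul_le_mul_of_nonneg_right h1 hZpos.le
  have hfc : P.Fcal b' = Z ^ (n + 1) / W ^ n := rfl
  rw [hfc, le_div_iff₀ (by positivity)]
  calc (2 * (n : ℝ) / lamMax) ^ n * Z * W ^ n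
      = (2 * (n : ℝ) / lamMax) ^ n * W ^ n * Z := by ring
    _ ≤ Z ^ n * Z := h2
    _ = Z ^ (n + 1) := by ring
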